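/- Let F be a balanced complete multipartite graph with at least two edges and let m ≥ 1. If a graph H has no subgraph isomorphic to (m, F), then H ↛nni (F)_{4m·v(F)}, i.e., there is a colouring of the edges of H with 4m·v(F) colours such that no subgraph of H isomorphic to F is monochromatic. -/

import Mathlib

open SimpleGraph

/-- `G →nni (F)_r` : every `r`-colouring of the edges of `G` yields a monochromatic
(not necessarily induced) subgraph of `G` isomorphic to `F`. -/
def ArrowNNI {V α : Type*} (G : SimpleGraph V) (F : SimpleGraph α) (r : ℕ) : Prop :=
  ∀ c : Sym2 V → Fin r, ∃ f : F →g G, Function.Injective f ∧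
    ∃ k : Fin r, ∀ x y, F.Adj x y → c s(f x, f y) = k

/-- `H` contains a copy of the graph `(m, F)` obtained by gluing `m` copies of `F` along
a single common edge: there are `m` injective homomorphic images of `F` in `H` and an
edge `xy` of `H` which is an edge of each copy, such that any two of the copies share
exactly the vertices `x` and `y`. -/
def HasGluedCopies {α V : Type*} (F : SimpleGraph α) (H : SimpleGraph V) (m : ℕ) : Prop :=
  ∃ (f : Fin m → F →g H) (x y : V), H.Adj x y ∧
    (∀ i, Function.Injective (f i)) ∧
    (∀ i, ∃ a b, F.Adj a b ∧ f i a = x ∧ f i b = y) ∧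
    (∀ i j, i ≠ j → Set.range (f i) ∩ Set.range (f j) = {x, y})

/-- In a nonempty finite set there is a maximum element with respect to any
trichotomous transitive relation. -/
lemma exists_rel_max {β : Type*} (r : β → β → Prop) [IsTrichotomous β r] [IsTrans β r]
    {S : Finset β} (hS : S.Nonempty) : ∃ e ∈ S, ∀ e' ∈ S, e' ≠ e → r e' e := by
  induction hS using Finset.Nonempty.cons_induction with
  | singleton a => exact ⟨a, by simp, by simp +contextual⟩
  | cons a S ha hS ih =>
    obtain ⟨e, heS, hmax⟩ := ih
    rcases trichotomous_of r a e with h | h | h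
    · refine ⟨e, by simp [heS], ?_⟩
      intro e' he' hne
      rcases Finset.mem_cons.mp he' with rfl | he'
      · exact h
      · exact hmax e' he' hne
    · exact absurd (h ▸ heS) ha
    · refine ⟨a, by simp, ?_⟩
      intro e' he' hne
      rcases Finset.mem_cons.mp he' with rfl | he'
      · exact absurd rfl hne
      · rcases eq_or_ne e' e with rfl | hne'
        · exact h
        · exact Trans.trans (hmax e' he' hne') h

lemma sdiff_univ_nonempty {β : Type*} [Fintype β] [DecidableEq β] (B : Finset β)
    (h : B.card < Fintype.card β) : (Finset.univ \ B).Nonempty := by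
  rw [← Finset.card_pos, Finset.card_sdiff_of_subset (Finset.subset_univ _), Finset.card_univ]
  omega

/-- The main combinatorial lemma, stated for an abstract graph `F` having the relevant
properties of balanced complete multipartite graphs: every vertex dominates at least one
endpoint of every edge, and any edge can be flipped by an automorphism. -/
lemma main_lemma {α : Type} [Fintype α] {V : Type} (F : SimpleGraph α) (R m : ℕ)
    (hm : 1 ≤ m)
    (hcard3 : 3 ≤ Fintype.card α)
    (hedge : ∃ a b : α, F.Adj a b)
    (hdom : ∀ a b u : α, F.Adj a b → F.Adj u a ∨ F.Adj u b)
    (hswap : ∀ a b : α, F.Adj a b → ∃ φ : α ≃ α,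
      (∀ u v, F.Adj (φ u) (φ v) ↔ F.Adj u v) ∧ φ a = b ∧ φ b = a)
    (hR : 2 * ((m - 1) * Fintype.card α) < R)
    (H : SimpleGraph V) (hfree : ¬ HasGluedCopies F H m) :
    ¬ ArrowNNI H F R := by
  classical
  intro harr
  -- choose representatives of the endpoints of each unordered pair
  have hsurj : ∀ e : Sym2 V, ∃ p : V × V, s(p.1, p.2) = e := fun e =>
    Sym2.ind (fun x y => ⟨(x, y), rfl⟩) e
  choose ep hep using hsurj
  -- the well-order on pairs
  have wf : WellFounded (WellOrderingRel (α := Sym2 V)) := IsWellFounded.wf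
  -- `InD e g` : `g` is an injective homomorphic copy of `F` containing the pair `e`
  -- as an edge, all of whose other edges precede `e` in the well-order.
  set InD : Sym2 V → (α → V) → Prop := fun e g =>
    (Function.Injective g ∧ ∀ a b : α, F.Adj a b → H.Adj (g a) (g b)) ∧
    (∃ a b : α, F.Adj a b ∧ s(g a, g b) = e) ∧
    (∀ a b : α, F.Adj a b → s(g a, g b) ≠ e → WellOrderingRel s(g a, g b) e) with hInD
  -- L1 : there are no `m` copies through `e` pairwise intersecting exactly in the
  -- endpoints of `e`.
  have L1 : ∀ (e : Sym2 V) (M : Finset (α → V)),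
      (∀ g ∈ M, (Function.Injective g ∧ ∀ a b : α, F.Adj a b → H.Adj (g a) (g b)) ∧
        ∃ a b : α, F.Adj a b ∧ s(g a, g b) = e) →
      (∀ g ∈ M, ∀ h ∈ M, g ≠ h → Set.range g ∩ Set.range h = {v | v ∈ e}) →
      M.card < m := by
    intro e M hcopy hpair
    by_contra hge
    push_neg at hge
    have hlen : M.toList.length = M.card := Finset.length_toList M
    have hidx : ∀ i : Fin m, (i : ℕ) < M.toList.length := fun i => by
      rw [hlen]; exact lt_of_lt_of_le i.2 hge
    set G : Fin m → (α → V) := fun i => M.toList.get ⟨i, hidx i⟩ with hG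
    have hGmem : ∀ i, G i ∈ M := fun i => Finset.mem_toList.mp (List.get_mem _ _)
    have hGne : ∀ i j : Fin m, i ≠ j → G i ≠ G j := by
      intro i j hij hEq
      have := (List.Nodup.get_inj_iff (Finset.nodup_toList M)).mp hEq
      exact hij (by simpa [Fin.ext_iff] using this)
    set x := (ep e).1 with hx
    set y := (ep e).2 with hy
    have hexy : s(x, y) = e := hep e
    have hAdjxy : H.Adj x y := by
      obtain ⟨⟨hinj, hhom⟩, a, b, hab, hsab⟩ := hcopy (G ⟨0, hm⟩) (hGmem _)
      have h2 : s(G ⟨0, hm⟩ a, G ⟨0, hm⟩ b) = s(x, y) := by rw [hsab, hexy]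
      rcases Sym2.eq_iff.mp h2 with ⟨h3, h4⟩ | ⟨h3, h4⟩
      · rw [← h3, ← h4]; exact hhom a b hab
      · rw [← h3, ← h4]; exact (hhom a b hab).symm
    have hexists : ∀ i : Fin m, ∃ f : F →g H, Function.Injective ⇑f ∧
        (∃ a b, F.Adj a b ∧ f a = x ∧ f b = y) ∧ Set.range ⇑f = Set.range (G i) := by
      intro i
      obtain ⟨⟨hinj, hhom⟩, a, b, hab, hsab⟩ := hcopy (G i) (hGmem i)
      have h2 : s(G i a, G i b) = s(x, y) := by rw [hsab, hexy]
      rcases Sym2.eq_iff.mp h2 with ⟨h3, h4⟩ | ⟨h3, h4⟩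
      · exact ⟨⟨G i, fun h => hhom _ _ h⟩, hinj, ⟨a, b, hab, h3, h4⟩, rfl⟩
      · obtain ⟨φ, hφ, hφa, hφb⟩ := hswap a b hab
        refine ⟨⟨fun u => G i (φ u), fun h => hhom _ _ ((hφ _ _).mpr h)⟩,
          hinj.comp φ.injective, ⟨a, b, hab, ?_, ?_⟩,
          Function.Surjective.range_comp φ.surjective (G i)⟩
        · show G i (φ a) = x
          rw [hφa, h4]
        · show G i (φ b) = y
          rw [hφb, h3]
    choose f hf1 hf2 hf3 using hexists
    apply hfree
    refine ⟨f, x, y, hAdjxy, hf1, hf2, ?_⟩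
    intro i j hij
    rw [hf3 i, hf3 j, hpair (G i) (hGmem i) (G j) (hGmem j) (hGne i j hij)]
    ext v
    rw [← hexy]
    simp [Sym2.mem_iff, Set.mem_insert_iff]
  -- L2 : a family of fewer than `m` copies through `e` which meets every copy
  -- through `e` outside the endpoints of `e`.
  have L2 : ∀ e : Sym2 V, ∃ M : Finset (α → V), M.card < m ∧
      ∀ g, InD e g → ∃ h ∈ M, ∃ w, w ∈ Set.range h ∧ w ∈ Set.range g ∧ ¬ w ∈ e := by
    intro e
    set P : ℕ → Prop := fun n => ∃ M : Finset (α → V), (∀ g ∈ M, InD e g) ∧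
      (∀ g ∈ M, ∀ h ∈ M, g ≠ h → Set.range g ∩ Set.range h = {v | v ∈ e}) ∧
      M.card = n with hP
    have hbound : ∀ n, P n → n < m := by
      rintro n ⟨M, h1, h2, h3⟩
      rw [← h3]
      exact L1 e M (fun g hg => ⟨(h1 g hg).1, (h1 g hg).2.1⟩) h2
    have hP0 : P 0 := ⟨∅, by simp, by simp, by simp⟩
    set N := Nat.findGreatest P (m - 1) with hN
    have hPN : P N := Nat.findGreatest_spec (Nat.zero_le _) hP0
    obtain ⟨M, hM1, hM2, hM3⟩ := hPN
    refine ⟨M, by rw [hM3]; exact hbound N ⟨M, hM1, hM2, hM3⟩, ?_⟩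
    intro g hg
    by_contra hno
    push_neg at hno
    have hEmem : ∀ g', InD e g' → ∀ v, v ∈ e → v ∈ Set.range g' := by
      intro g' hg' v hv
      obtain ⟨-, ⟨a, b, hab, hsab⟩, -⟩ := hg'
      rw [← hsab] at hv
      rcases Sym2.mem_iff.mp hv with rfl | rfl
      · exact ⟨a, rfl⟩
      · exact ⟨b, rfl⟩
    have hsub : ∀ h ∈ M, Set.range g ∩ Set.range h = {v | v ∈ e} := by
      intro h hh
      apply Set.eq_of_subset_of_subset
      · rintro v ⟨hvg, hvh⟩
        exact hno h hh v hvh hvg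
      · intro v hv
        exact ⟨hEmem g hg v hv, hEmem h (hM1 h hh) v hv⟩
    have hgM : g ∉ M := by
      intro hgM
      obtain ⟨T, hTsub, hT3⟩ := Finset.exists_subset_card_eq (s := Finset.univ) (n := 3) (by simpa using hcard3)
      obtain ⟨u₁, u₂, u₃, h12, h13, h23, rfl⟩ := Finset.card_eq_three.mp hT3
      have hinj := hg.1.1
      have hout : ∃ w, w ∈ Set.range g ∧ ¬ w ∈ e := by
        by_contra hcon
        push_neg at hcon
        have h1 := hcon (g u₁) ⟨u₁, rfl⟩
        have h2 := hcon (g u₂) ⟨u₂, rfl⟩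
        have h3 := hcon (g u₃) ⟨u₃, rfl⟩
        rw [← hep e, Sym2.mem_iff] at h1 h2 h3
        rcases h1 with h1 | h1 <;> rcases h2 with h2 | h2 <;> rcases h3 with h3 | h3 <;>
          first
          | exact h12 (hinj (h1.trans h2.symm))
          | exact h13 (hinj (h1.trans h3.symm))
          | exact h23 (hinj (h2.trans h3.symm))
      obtain ⟨w, hwg, hwe⟩ := hout
      exact hwe (hno g hgM w hwg hwg)
    have hPN1 : P (N + 1) := by
      refine ⟨insert g M, ?_, ?_, by rw [Finset.card_insert_of_notMem hgM, hM3]⟩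
      · intro g' hg'
        rcases Finset.mem_insert.mp hg' with rfl | hg'
        · exact hg
        · exact hM1 g' hg'
      · intro g₁ hg₁ g₂ hg₂ hne
        rcases Finset.mem_insert.mp hg₁ with h₁ | h₁
        · rcases Finset.mem_insert.mp hg₂ with h₂ | h₂
          · exact absurd (h₁.trans h₂.symm) hne
          · rw [h₁]; exact hsub g₂ h₂
        · rcases Finset.mem_insert.mp hg₂ with h₂ | h₂
          · rw [h₂, Set.inter_comm]; exact hsub g₁ h₁
          · exact hM2 g₁ h₁ g₂ h₂ hne
    have hlt : N + 1 ≤ m - 1 := by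
      have := hbound (N + 1) hPN1
      omega
    exact absurd hPN1 (Nat.findGreatest_is_greatest (by omega) hlt)
  choose Mfam hMcard hMmax using L2
  -- the finite set of vertices covered by the chosen families
  set U : Sym2 V → Finset V := fun e =>
    (Mfam e).biUnion fun h => Finset.image h Finset.univ with hU
  have hUcard : ∀ e, (U e).card ≤ (m - 1) * Fintype.card α := by
    intro e
    calc (U e).card ≤ ∑ h ∈ Mfam e, (Finset.image h Finset.univ).card :=
          Finset.card_biUnion_le
      _ ≤ (Mfam e).card • Fintype.card α := Finset.sum_le_card_nsmul _ _ _
          (fun h _ => le_trans Finset.card_image_le (by simp))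
      _ ≤ (m - 1) * Fintype.card α := by
          have := hMcard e
          simp only [smul_eq_mul]
          exact Nat.mul_le_mul_right _ (by omega)
  -- the dangerous earlier pairs
  set Nbr : Sym2 V → Finset (Sym2 V) := fun e =>
    (((U e).image fun w => s((ep e).1, w)) ∪ ((U e).image fun w => s((ep e).2, w))).filter
      (fun e' => WellOrderingRel e' e) with hNbr
  have hNbrlt : ∀ (x : Sym2 V) (e : Sym2 V), x ∈ Nbr e → WellOrderingRel x e :=
    fun x e h => (Finset.mem_filter.mp h).2
  have hNbrcard : ∀ e, (Nbr e).card < R := by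
    intro e
    have h1 : (Nbr e).card ≤ _ := Finset.card_filter_le _ _
    have h2 := Finset.card_union_le ((U e).image fun w => s((ep e).1, w))
      ((U e).image fun w => s((ep e).2, w))
    have h3 : ((U e).image fun w => s((ep e).1, w)).card ≤ (U e).card :=
      Finset.card_image_le
    have h4 : ((U e).image fun w => s((ep e).2, w)).card ≤ (U e).card :=
      Finset.card_image_le
    have h5 := hUcard e
    omega
  -- the colouring, defined by well-founded recursion: the colour of `e` avoids the
  -- colours of all pairs in `Nbr e`.
  obtain ⟨C, hCprop⟩ : ∃ C : Sym2 V → Fin R,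
      ∀ e, C e ∉ (Nbr e).attach.image fun x => C x.1 := by
    refine ⟨wf.fix (fun e ih =>
      (Finset.univ \ (Nbr e).attach.image fun x => ih x.1 (hNbrlt x.1 e x.2)).min'
        (sdiff_univ_nonempty _ (by
          rw [Fintype.card_fin]
          exact lt_of_le_of_lt (le_trans Finset.card_image_le
            (le_of_eq Finset.card_attach)) (hNbrcard e)))), fun e => ?_⟩
    rw [WellFounded.fix_eq]
    intro hmem
    exact (Finset.mem_sdiff.mp (Finset.min'_mem _ _)).2 hmem
  have hCne : ∀ e e', e' ∈ Nbr e → C e ≠ C e' := by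
    intro e e' he' hEq
    exact hCprop e (by rw [hEq]; exact Finset.mem_image.mpr ⟨⟨e', he'⟩, Finset.mem_attach _ _, rfl⟩)
  -- now apply the Ramsey hypothesis to this colouring and derive a contradiction
  obtain ⟨f0, hf0inj, κ, hκ⟩ := harr C
  set g : α → V := ⇑f0 with hg
  have hghom : ∀ a b : α, F.Adj a b → H.Adj (g a) (g b) := fun a b h => f0.map_adj h
  set E0 : Finset (Sym2 V) := Finset.image (fun p : α × α => s(g p.1, g p.2))
    (Finset.univ.filter fun p : α × α => F.Adj p.1 p.2) with hE0
  have hE0ne : E0.Nonempty := by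
    obtain ⟨a, b, hab⟩ := hedge
    exact ⟨s(g a, g b), Finset.mem_image.mpr ⟨(a, b), by simp [hab], rfl⟩⟩
  obtain ⟨e, heE0, hemax⟩ := exists_rel_max (WellOrderingRel (α := Sym2 V)) hE0ne
  obtain ⟨⟨a₀, b₀⟩, hab₀mem, hab₀⟩ := Finset.mem_image.mp heE0
  have hab₀adj : F.Adj a₀ b₀ := by simpa using (Finset.mem_filter.mp hab₀mem).2
  have hgInD : InD e g := by
    refine ⟨⟨hf0inj, hghom⟩, ⟨a₀, b₀, hab₀adj, hab₀⟩, ?_⟩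
    intro a b hab hne
    exact hemax _ (Finset.mem_image.mpr ⟨(a, b), by simp [hab], rfl⟩) hne
  obtain ⟨h, hhM, w, hwh, hwg, hwe⟩ := hMmax e g hgInD
  obtain ⟨u, rfl⟩ := hwg
  have hwU : g u ∈ U e := by
    obtain ⟨u', hu'⟩ := hwh
    exact Finset.mem_biUnion.mpr ⟨h, hhM, Finset.mem_image.mpr ⟨u', Finset.mem_univ _, hu'⟩⟩
  -- find the other endpoint
  have hz : ∃ z : α, F.Adj u z ∧ g z ∈ e := by
    rcases hdom a₀ b₀ u hab₀adj with hu | hu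
    · exact ⟨a₀, hu, by rw [← hab₀]; exact Sym2.mem_mk_left _ _⟩
    · exact ⟨b₀, hu, by rw [← hab₀]; exact Sym2.mem_mk_right _ _⟩
  obtain ⟨z, huz, hze⟩ := hz
  set e' := s(g u, g z) with he'
  have he'E0 : e' ∈ E0 := Finset.mem_image.mpr ⟨(u, z), by simp [huz], rfl⟩
  have he'ne : e' ≠ e := by
    intro hEq
    apply hwe
    rw [← hEq]
    exact Sym2.mem_mk_left _ _
  have he'lt : WellOrderingRel e' e := hemax e' he'E0 he'ne
  have he'Nbr : e' ∈ Nbr e := by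
    rw [hNbr]
    refine Finset.mem_filter.mpr ⟨Finset.mem_union.mpr ?_, he'lt⟩
    have hz2 : g z = (ep e).1 ∨ g z = (ep e).2 := by
      rw [← hep e, Sym2.mem_iff] at hze
      exact hze
    rcases hz2 with hz2 | hz2
    · exact Or.inl (Finset.mem_image.mpr ⟨g u, hwU, by rw [← hz2, Sym2.eq_swap]⟩)
    · exact Or.inr (Finset.mem_image.mpr ⟨g u, hwU, by rw [← hz2, Sym2.eq_swap]⟩)
  have hCee' : C e ≠ C e' := hCne e e' he'Nbr
  apply hCee'
  have h1 : C e = κ := by rw [← hab₀]; exact hκ a₀ b₀ hab₀adj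
  have h2 : C e' = κ := hκ u z huz
  rw [h1, h2]

/-- Let `F` be a balanced complete multipartite graph (with `t` parts of size `s`) having
at least two edges, and let `m ≥ 1`.  If a graph `H` has no subgraph isomorphic to
`(m, F)`, then `H ↛nni (F)_{4·m·v(F)}` where `v(F) = t·s`. -/
theorem glued_free_graphs_are_not_ramsey (t s m : ℕ) (hm : 1 ≤ m)
    (hE : 2 ≤ (completeMultipartiteGraph fun _ : Fin t => Fin s).edgeSet.ncard)
    {V : Type} (H : SimpleGraph V)
    (hfree : ¬ HasGluedCopies (completeMultipartiteGraph fun _ : Fin t => Fin s) H m) :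
    ¬ ArrowNNI H (completeMultipartiteGraph fun _ : Fin t => Fin s) (4 * m * (t * s)) := by
  classical
  set F := completeMultipartiteGraph fun _ : Fin t => Fin s with hF
  have hadj : ∀ a b : Σ _ : Fin t, Fin s, F.Adj a b ↔ a.1 ≠ b.1 := by
    intro a b
    simp [hF, completeMultipartiteGraph, comap_adj, top_adj]
  have hcardW : Fintype.card (Σ _ : Fin t, Fin s) = t * s := by
    simp [Fintype.card_sigma]
  -- two distinct edges give three distinct vertices
  have hE2 : ∃ e₁ ∈ F.edgeSet, ∃ e₂ ∈ F.edgeSet, e₁ ≠ e₂ := by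
    obtain ⟨e₁, e₂, h1, h2, hne⟩ := (Set.one_lt_ncard_iff (Set.toFinite _)).mp
      (lt_of_lt_of_le one_lt_two hE)
    exact ⟨e₁, h1, e₂, h2, hne⟩
  obtain ⟨e₁, he₁, e₂, he₂, hne⟩ := hE2
  induction e₁ using Sym2.ind with
  | _ a b =>
  induction e₂ using Sym2.ind with
  | _ c d =>
  rw [mem_edgeSet] at he₁ he₂
  have hab : a ≠ b := he₁.ne
  have hcd : c ≠ d := he₂.ne
  have h3v : ∃ u₁ u₂ u₃ : Σ _ : Fin t, Fin s, u₁ ≠ u₂ ∧ u₁ ≠ u₃ ∧ u₂ ≠ u₃ := by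
    by_cases hc : c = a ∨ c = b
    · by_cases hd : d = a ∨ d = b
      · exfalso
        apply hne
        rcases hc with rfl | rfl <;> rcases hd with rfl | rfl
        · exact absurd rfl hcd
        · rfl
        · exact Sym2.eq_swap
        · exact absurd rfl hcd
      · push_neg at hd
        exact ⟨a, b, d, hab, Ne.symm hd.1, Ne.symm hd.2⟩
    · push_neg at hc
      exact ⟨a, b, c, hab, Ne.symm hc.1, Ne.symm hc.2⟩
  have hcard3 : 3 ≤ Fintype.card (Σ _ : Fin t, Fin s) := by
    obtain ⟨u₁, u₂, u₃, h12, h13, h23⟩ := h3v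
    have : ({u₁, u₂, u₃} : Finset (Σ _ : Fin t, Fin s)).card = 3 := by
      rw [Finset.card_insert_of_notMem (by simp [h12, h13]),
        Finset.card_insert_of_notMem (by simp [h23]), Finset.card_singleton]
    calc 3 = ({u₁, u₂, u₃} : Finset (Σ _ : Fin t, Fin s)).card := this.symm
      _ ≤ Fintype.card (Σ _ : Fin t, Fin s) := Finset.card_le_univ _
  refine main_lemma F (4 * m * (t * s)) m hm hcard3 ⟨a, b, he₁⟩ ?_ ?_ ?_ H hfree
  · -- domination
    intro x y u hxy
    rw [hadj] at hxy ⊢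
    rw [hadj]
    by_cases h : u.1 = x.1
    · exact Or.inr (h ▸ hxy)
    · exact Or.inl h
  · -- swap automorphism
    intro x y hxy
    rw [hadj] at hxy
    refine ⟨⟨fun u => ⟨Equiv.swap x.1 y.1 u.1, Equiv.swap x.2 y.2 u.2⟩,
      fun u => ⟨Equiv.swap x.1 y.1 u.1, Equiv.swap x.2 y.2 u.2⟩,
      fun u => by simp, fun u => by simp⟩, ?_, ?_, ?_⟩
    · intro u v
      rw [hadj, hadj]
      exact not_congr (Equiv.apply_eq_iff_eq _)
    · show (⟨Equiv.swap x.1 y.1 x.1, Equiv.swap x.2 y.2 x.2⟩ : Σ _ : Fin t, Fin s) = y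
      rw [Equiv.swap_apply_left, Equiv.swap_apply_left]
    · show (⟨Equiv.swap x.1 y.1 y.1, Equiv.swap x.2 y.2 y.2⟩ : Σ _ : Fin t, Fin s) = x
      rw [Equiv.swap_apply_right, Equiv.swap_apply_right]
  · -- the arithmetic bound
    rw [hcardW, mul_assoc]
    have hk : 3 ≤ t * s := by rw [← hcardW]; exact hcard3
    have h2 : (m - 1) * (t * s) ≤ m * (t * s) :=
      Nat.mul_le_mul_right _ (Nat.sub_le _ _)
    have hmk : 1 ≤ m * (t * s) := le_trans (by norm_num) (Nat.mul_le_mul hm hk)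
    generalize hA : (m - 1) * (t * s) = A at h2
    generalize hq : m * (t * s) = q at h2 hmk ⊢
    omega
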